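/- Let $K$ be a real symmetric $p\times p$ matrix and $\mu>0$. Then the matrix $\Theta := \dfrac{K+\sqrt{K^2+4\mu I}}{2\mu}$ is symmetric positive definite and satisfies the matrix quadratic equation $-\Theta^{-1}+\mu\Theta = K$. -/

import Mathlib

open Matrix

open scoped ComplexOrder in
/-- The positive semidefinite square root of a positive semidefinite matrix
(the definition `Matrix.PosSemidef.sqrt` of the older Mathlib, since removed). -/
noncomputable def Matrix.PosSemidef.sqrt {n : Type*} [Fintype n] [DecidableEq n] {𝕜 : Type*}
    [RCLike 𝕜] {A : Matrix n n 𝕜} (hA : A.PosSemidef) : Matrix n n 𝕜 :=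
  hA.1.eigenvectorUnitary.1 * Matrix.diagonal ((↑) ∘ (√·) ∘ hA.1.eigenvalues) *
  (star hA.1.eigenvectorUnitary : Matrix n n 𝕜)


lemma posDef_smul_aux {p : ℕ} {A : Matrix (Fin p) (Fin p) ℝ} {c : ℝ} (hc : 0 < c)
    (hA : A.PosDef) : (c • A).PosDef := by
  refine posDef_iff_dotProduct_mulVec.mpr ⟨?_, ?_⟩
  · have h := hA.1.eq
    simp only [IsHermitian, conjTranspose_smul, h, star_trivial]
  · intro x hx
    have := hA.dotProduct_mulVec_pos hx
    simp only [smul_mulVec, dotProduct_smul, smul_eq_mul]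
    exact mul_pos hc this

lemma posDef_conj_unitary {p : ℕ} (U D : Matrix (Fin p) (Fin p) ℝ)
    (hU : U * star U = 1) (hD : D.PosDef) : (U * D * star U).PosDef := by
  refine posDef_iff_dotProduct_mulVec.mpr ⟨?_, ?_⟩
  · have h := hD.1
    simp only [star_eq_conjTranspose, IsHermitian, conjTranspose_mul,
      conjTranspose_conjTranspose, h.eq, mul_assoc]
  · intro x hx
    have h1 : star U *ᵥ x ≠ 0 := by
      intro h
      apply hx
      have := congrArg (fun v => U *ᵥ v) h
      simpa [mulVec_mulVec, hU] using this
    have key := hD.dotProduct_mulVec_pos h1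
    rw [show U * D * star U = (star U)ᴴ * D * (star U) by
      simp [star_eq_conjTranspose]]
    simpa only [star_mulVec, dotProduct_mulVec, vecMul_vecMul] using key

/-- The matrix `Θ = (K + √(K ^ 2 + 4μ I)) / (2μ)` is symmetric positive
definite and solves the matrix quadratic equation `-Θ⁻¹ + μ Θ = K`.  The
hypothesis `hP` is automatically satisfied since `K` is symmetric and `μ > 0`. -/
theorem theta_update_solves_quadratic (p : ℕ) (K : Matrix (Fin p) (Fin p) ℝ)
    (hK : K.IsHermitian) (μ : ℝ) (hμ : 0 < μ)
    (hP : (K ^ 2 + (4 * μ) • (1 : Matrix (Fin p) (Fin p) ℝ)).PosSemidef) :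
    ((2 * μ)⁻¹ • (K + hP.sqrt)).PosDef ∧
      -((2 * μ)⁻¹ • (K + hP.sqrt))⁻¹ + μ • ((2 * μ)⁻¹ • (K + hP.sqrt)) = K := by
  classical
  set U : Matrix (Fin p) (Fin p) ℝ := (hK.eigenvectorUnitary : Matrix (Fin p) (Fin p) ℝ) with hUdef
  have hU1 : U * star U = 1 := Matrix.mem_unitaryGroup_iff.mp hK.eigenvectorUnitary.2
  have hU2 : star U * U = 1 := Matrix.mem_unitaryGroup_iff'.mp hK.eigenvectorUnitary.2
  set lam : Fin p → ℝ := hK.eigenvalues with hlam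
  have hKspec : K = U * diagonal lam * star U := by
    have := hK.spectral_theorem
    simpa [hUdef, Function.comp] using this
  set f : Fin p → ℝ := fun i => Real.sqrt (lam i ^ 2 + 4 * μ) with hf
  have hfpos : ∀ i, 0 < f i := fun i =>
    Real.sqrt_pos.mpr (by positivity)
  have hf2 : ∀ i, f i * f i = lam i ^ 2 + 4 * μ := fun i =>
    Real.mul_self_sqrt (by positivity)
  -- conjugation multiplication helper
  have conj_mul : ∀ a b : Fin p → ℝ,
      (U * diagonal a * star U) * (U * diagonal b * star U)
        = U * diagonal (a * b) * star U := by
    intro a b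
    calc (U * diagonal a * star U) * (U * diagonal b * star U)
        = U * (diagonal a * ((star U * U) * diagonal b)) * star U := by
          simp only [Matrix.mul_assoc]
      _ = U * diagonal (a * b) * star U := by
          rw [hU2, one_mul, diagonal_mul_diagonal]
          rfl
  set T : Matrix (Fin p) (Fin p) ℝ := U * diagonal f * star U with hT
  have hTpsd : T.PosSemidef := by
    have : (diagonal f).PosSemidef := posSemidef_diagonal_iff.mpr fun i => (hfpos i).le
    simpa [hT, star_eq_conjTranspose] using this.mul_mul_conjTranspose_same U
  have hT2 : T ^ 2 = K ^ 2 + (4 * μ) • (1 : Matrix (Fin p) (Fin p) ℝ) := by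
    rw [pow_two, hT, conj_mul]
    rw [pow_two, hKspec, conj_mul]
    have h1 : ((4 : ℝ) * μ) • (1 : Matrix (Fin p) (Fin p) ℝ)
        = U * diagonal (fun _ => 4 * μ) * star U := by
      rw [show diagonal (fun _ : Fin p => 4 * μ) = (4 * μ) • (1 : Matrix (Fin p) (Fin p) ℝ) by
        rw [smul_eq_diagonal_mul]; simp [diagonal_mul_diagonal]]
      rw [Matrix.mul_smul, Matrix.smul_mul, Matrix.mul_one, hU1]
    rw [h1, ← Matrix.add_mul, ← Matrix.mul_add, diagonal_add]
    have hff : f * f = fun i => lam i * lam i + 4 * μ := by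
      funext i
      simp only [Pi.mul_apply]
      rw [hf2 i]
      ring
    rw [hff]
    rfl
  have hsqrt : hP.sqrt = T := by
    open scoped MatrixOrder in
    rw [← CFC.sqrt_unique (a := K ^ 2 + (4 * μ) • 1) (b := T) (by rw [← pow_two, hT2])
      hTpsd.nonneg]
    open scoped MatrixOrder in
    rw [CFC.sqrt_eq_cfc, cfc_nnreal_eq_real _ _ hP.nonneg, hP.1.cfc_eq]
    simp [Matrix.PosSemidef.sqrt, IsHermitian.cfc, Function.comp_def, max_eq_left (hP.eigenvalues_nonneg _)]
  have hsum : K + hP.sqrt = U * diagonal (lam + f) * star U := by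
    rw [hsqrt, hT, hKspec, ← Matrix.add_mul, ← Matrix.mul_add, diagonal_add]
    rfl
  have hdiff : hP.sqrt - K = U * diagonal (f - lam) * star U := by
    rw [hsqrt, hT, hKspec, ← Matrix.sub_mul, ← Matrix.mul_sub, diagonal_sub]
    rfl
  have h2μ : (0 : ℝ) < 2 * μ := by linarith
  constructor
  · apply posDef_smul_aux (by positivity)
    rw [hsum]
    apply posDef_conj_unitary _ _ hU1
    apply Matrix.PosDef.diagonal
    intro i
    have habs : |lam i| < f i := by
      rw [hf]
      have h1 : |lam i| = Real.sqrt (lam i ^ 2) := (Real.sqrt_sq_eq_abs _).symm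
      rw [h1]
      exact Real.sqrt_lt_sqrt (sq_nonneg _) (by linarith)
    have := (abs_lt.mp habs).1
    simp only [Pi.add_apply]
    linarith
  · -- inverse computation
    have hmul : (K + hP.sqrt) * (hP.sqrt - K) = (4 * μ) • (1 : Matrix (Fin p) (Fin p) ℝ) := by
      rw [hsum, hdiff, conj_mul]
      have : (lam + f) * (f - lam) = fun _ => 4 * μ := by
        ext i
        simp only [Pi.mul_apply, Pi.add_apply, Pi.sub_apply]
        have := hf2 i
        ring_nf
        nlinarith [hf2 i]
      rw [this]
      rw [show diagonal (fun _ : Fin p => 4 * μ) = (4 * μ) • (1 : Matrix (Fin p) (Fin p) ℝ) by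
        rw [smul_eq_diagonal_mul]; simp [diagonal_mul_diagonal]]
      rw [Matrix.mul_smul, Matrix.smul_mul, Matrix.mul_one, hU1]
    have hinv : ((2 * μ)⁻¹ • (K + hP.sqrt))⁻¹ = (2 : ℝ)⁻¹ • (hP.sqrt - K) := by
      apply Matrix.inv_eq_right_inv
      rw [Matrix.smul_mul, Matrix.mul_smul, hmul, smul_smul, smul_smul]
      rw [show (2 * μ)⁻¹ * 2⁻¹ * (4 * μ) = 1 by field_simp; ring, one_smul]
    rw [hinv]
    rw [smul_smul]
    rw [show μ * (2 * μ)⁻¹ = 2⁻¹ by field_simp]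
    ext i j
    simp only [Matrix.add_apply, Matrix.neg_apply, Matrix.smul_apply, Matrix.sub_apply,
      smul_eq_mul]
    ring
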